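/- Let λ : ℕ → ℝ be a nonincreasing summable sequence with λ₀ = 1 and 0 ≤ λᵢ ≤ 1 for all i, and 0 < λ₁ < 1. For each integer k ≥ 2 set s_k = Σ_{i=0}^∞ λᵢ^k and l_k = (s_k − 1)/(s_{k−1} − 1). Then l_k converges to λ₁ as k → ∞ (monotonically from below). -/

import Mathlib

open Filter

/-- Cauchy–Schwarz for tsums, in "sq eq mul" form. -/
lemma tsum_sq_le_tsum_mul_tsum {r f g : ℕ → ℝ} (hr : Summable r) (hf : Summable f)
    (hg : Summable g) (hf0 : ∀ i, 0 ≤ f i) (hg0 : ∀ i, 0 ≤ g i)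
    (ht : ∀ i, r i ^ 2 = f i * g i) :
    (∑' i, r i) ^ 2 ≤ (∑' i, f i) * ∑' i, g i := by
  have key : ∀ n : ℕ, (∑ i ∈ Finset.range n, r i) ^ 2 ≤ (∑' i, f i) * ∑' i, g i := by
    intro n
    calc (∑ i ∈ Finset.range n, r i) ^ 2
        ≤ (∑ i ∈ Finset.range n, f i) * ∑ i ∈ Finset.range n, g i :=
          Finset.sum_sq_le_sum_mul_sum_of_sq_eq_mul _ (fun i _ => hf0 i) (fun i _ => hg0 i)
            (fun i _ => ht i)
      _ ≤ (∑' i, f i) * ∑' i, g i := by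
          apply mul_le_mul (Summable.sum_le_tsum _ (fun i _ => hf0 i) hf)
            (Summable.sum_le_tsum _ (fun i _ => hg0 i) hg)
            (Finset.sum_nonneg fun i _ => hg0 i) (tsum_nonneg hf0)
  have hlim : Tendsto (fun n => (∑ i ∈ Finset.range n, r i) ^ 2) atTop
      (nhds ((∑' i, r i) ^ 2)) := (hr.hasSum.tendsto_sum_nat).pow 2
  exact le_of_tendsto hlim (Eventually.of_forall key)

theorem lower_bounds_tendsto_second_eigenvalue
    (l : ℕ → ℝ) (hmono : Antitone l) (hsum : Summable l)
    (h0 : l 0 = 1) (hbd : ∀ i, 0 ≤ l i ∧ l i ≤ 1)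
    (hpos : 0 < l 1) (h1 : l 1 < 1)
    (s : ℕ → ℝ) (hs : ∀ k : ℕ, 1 ≤ k → s k = ∑' i, (l i) ^ k)
    (lk : ℕ → ℝ) (hlk : ∀ k : ℕ, 2 ≤ k → lk k = (s k - 1) / (s (k - 1) - 1)) :
    Tendsto lk atTop (nhds (l 1)) ∧
    (∀ k : ℕ, 2 ≤ k → lk k ≤ lk (k + 1) ∧ lk k ≤ l 1) := by
  -- basic facts
  have hnn : ∀ i, 0 ≤ l i := fun i => (hbd i).1
  have hle1 : ∀ i, l i ≤ 1 := fun i => (hbd i).2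
  -- summability of powers of the shifted sequence
  have hsum' : Summable (fun i => l (i + 1)) := (summable_nat_add_iff 1).2 hsum
  have hsumk : ∀ k : ℕ, 1 ≤ k → Summable (fun i => l (i + 1) ^ k) := by
    intro k hk
    refine hsum'.of_nonneg_of_le (fun i => pow_nonneg (hnn _) _) (fun i => ?_)
    exact pow_le_of_le_one (hnn _) (hle1 _) (by omega)
  have hsumk0 : ∀ k : ℕ, 1 ≤ k → Summable (fun i => l i ^ k) := by
    intro k hk
    refine hsum.of_nonneg_of_le (fun i => pow_nonneg (hnn _) _) (fun i => ?_)
    exact pow_le_of_le_one (hnn _) (hle1 _) (by omega)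
  -- the tail sums t k
  set t : ℕ → ℝ := fun k => ∑' i, l (i + 1) ^ k with ht
  have hst : ∀ k : ℕ, 1 ≤ k → s k - 1 = t k := by
    intro k hk
    rw [hs k hk, Summable.tsum_eq_zero_add (hsumk0 k hk), h0, one_pow]
    ring
  have htpos : ∀ k : ℕ, 1 ≤ k → 0 < t k := by
    intro k hk
    exact Summable.tsum_pos (hsumk k hk) (fun i => pow_nonneg (hnn _) _) 0
      (pow_pos hpos k)
  -- t (k+1) ≤ l 1 * t k
  have hstep : ∀ k : ℕ, 1 ≤ k → t (k + 1) ≤ l 1 * t k := by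
    intro k hk
    have h1' : ∀ i : ℕ, l (i + 1) ^ (k + 1) ≤ l (i + 1) ^ k * l 1 := by
      intro i
      rw [pow_succ]
      exact mul_le_mul_of_nonneg_left (hmono (by omega)) (pow_nonneg (hnn _) _)
    calc t (k + 1) ≤ ∑' i, l (i + 1) ^ k * l 1 :=
          Summable.tsum_le_tsum h1' (hsumk (k+1) (by omega)) ((hsumk k hk).mul_right _)
      _ = t k * l 1 := tsum_mul_right
      _ = l 1 * t k := mul_comm _ _
  -- lower bound: l 1 ^ k ≤ t k
  have hlow : ∀ k : ℕ, 1 ≤ k → l 1 ^ k ≤ t k := by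
    intro k hk
    have := Summable.sum_le_tsum {0} (fun i _ => pow_nonneg (hnn _) _) (hsumk k hk)
    simpa using this
  -- Cauchy–Schwarz: t (k+1) ^ 2 ≤ t k * t (k+2)
  have hcs : ∀ k : ℕ, 1 ≤ k → t (k + 1) ^ 2 ≤ t k * t (k + 2) := by
    intro k hk
    refine tsum_sq_le_tsum_mul_tsum (hsumk (k+1) (by omega)) (hsumk k hk)
      (hsumk (k+2) (by omega)) (fun i => pow_nonneg (hnn _) _)
      (fun i => pow_nonneg (hnn _) _) (fun i => ?_)
    rw [← pow_add, ← pow_mul]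
    ring_nf
  -- lk in terms of t
  have hlkt : ∀ k : ℕ, 2 ≤ k → lk k = t k / t (k - 1) := by
    intro k hk
    rw [hlk k hk, hst k (by omega), hst (k - 1) (by omega)]
  -- monotonicity and bound
  have hmono2 : ∀ k : ℕ, 2 ≤ k → lk k ≤ lk (k + 1) := by
    intro k hk
    rw [hlkt k hk, hlkt (k + 1) (by omega)]
    have e1 : k + 1 - 1 = k := by omega
    rw [e1]
    rw [div_le_div_iff₀ (htpos (k-1) (by omega)) (htpos k (by omega))]
    have := hcs (k - 1) (by omega)
    have e2 : k - 1 + 1 = k := by omega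
    have e3 : k - 1 + 2 = k + 1 := by omega
    rw [e2, e3] at this
    nlinarith [this]
  have hub : ∀ k : ℕ, 2 ≤ k → lk k ≤ l 1 := by
    intro k hk
    rw [hlkt k hk, div_le_iff₀ (htpos (k-1) (by omega))]
    have := hstep (k - 1) (by omega)
    have e2 : k - 1 + 1 = k := by omega
    rw [e2] at this
    linarith [this]
  refine ⟨?_, fun k hk => ⟨hmono2 k hk, hub k hk⟩⟩
  -- convergence: consider g n := lk (n + 2)
  set g : ℕ → ℝ := fun n => lk (n + 2) with hg
  have hgmono : Monotone g := by
    apply monotone_nat_of_le_succ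
    intro n
    exact hmono2 (n + 2) (by omega)
  have hgbdd : BddAbove (Set.range g) := by
    refine ⟨l 1, ?_⟩
    rintro x ⟨n, rfl⟩
    exact hub (n + 2) (by omega)
  set L : ℝ := ⨆ n, g n with hL
  have hgL : Tendsto g atTop (nhds L) := tendsto_atTop_ciSup hgmono hgbdd
  have hgleL : ∀ n, g n ≤ L := fun n => le_ciSup hgbdd n
  have hLle : L ≤ l 1 := ciSup_le fun n => hub (n + 2) (by omega)
  have hLpos : 0 < L := by
    have h2 : 0 < lk 2 := by
      rw [hlkt 2 (le_refl 2)]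
      exact div_pos (htpos 2 (by omega)) (htpos 1 (by omega))
    calc (0:ℝ) < lk 2 := h2
      _ = g 0 := rfl
      _ ≤ L := hgleL 0
  -- t (k+1) ≤ L ^ k * t 1
  have hTL : ∀ k : ℕ, t (k + 1) ≤ L ^ k * t 1 := by
    intro k
    induction k with
    | zero => simp
    | succ n ih =>
      have h1' : lk (n + 2) ≤ L := hgleL n
      have h2' : t (n + 2) ≤ L * t (n + 1) := by
        have e : (n + 2 : ℕ) - 1 = n + 1 := by omega
        rw [hlkt (n + 2) (by omega), e, div_le_iff₀ (htpos (n + 1) (by omega))] at h1'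
        linarith [h1']
      calc t (n + 1 + 1) = t (n + 2) := by norm_num
        _ ≤ L * t (n + 1) := h2'
        _ ≤ L * (L ^ n * t 1) := by
            exact mul_le_mul_of_nonneg_left ih hLpos.le
        _ = L ^ (n + 1) * t 1 := by ring
  -- conclude l 1 ≤ L
  have hl1L : l 1 ≤ L := by
    by_contra hcon
    push_neg at hcon
    have hr1 : 1 < l 1 / L := (one_lt_div hLpos).2 hcon
    have hrt : Tendsto (fun k : ℕ => (l 1 / L) ^ k) atTop atTop :=
      tendsto_pow_atTop_atTop_of_one_lt hr1
    have hbound : ∀ k : ℕ, (l 1 / L) ^ k ≤ t 1 / l 1 := by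
      intro k
      have h1' : l 1 ^ (k + 1) ≤ L ^ k * t 1 := le_trans (hlow (k + 1) (by omega)) (hTL k)
      rw [div_pow, div_le_div_iff₀ (pow_pos hLpos k) hpos]
      calc l 1 ^ k * l 1 = l 1 ^ (k + 1) := by ring
        _ ≤ L ^ k * t 1 := h1'
        _ = t 1 * L ^ k := mul_comm _ _
    obtain ⟨k, hk⟩ := (hrt.eventually_gt_atTop (t 1 / l 1)).exists
    exact absurd (hbound k) (not_le.2 hk)
  have hLeq : L = l 1 := le_antisymm hLle hl1L
  have : Tendsto g atTop (nhds (l 1)) := hLeq ▸ hgL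
  exact (tendsto_add_atTop_iff_nat 2).1 this
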